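/- Suppose each f_i is L-smooth and the averaged EDM iterates satisfy x̄^(r+1) = x̄^(r) − α·m̄^(r) for all r. Define Ñ^(t) = (1−β)·Σ_{j=0}^{t} β^{t−j}·∇𝐟(X̄^(j)) + β^{t+1}·∇𝐟(X̄^(0)). Then for every t ≥ 0, ‖P_I(Ñ^(t+1) − Ñ^(t))‖_F² ≤ n·α²L²·Σ_{r=0}^{t} (1−β)·β^{t−r}·‖m̄^(r)‖². -/

import Mathlib

noncomputable section

/-- The auxiliary sequence `Ñ^(t) = (1-β)·Σ_{j=0}^t β^{t-j}·∇𝐟(X̄^(j)) + β^{t+1}·∇𝐟(X̄^(0))`;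
its `i`-th row is given here (row `i` of `∇𝐟(X̄^(j))` is `∇f_i(x̄^(j))`). -/
def Ntil {n d : ℕ} (f : Fin n → EuclideanSpace ℝ (Fin d) → ℝ) (β : ℝ)
    (xbar : ℕ → EuclideanSpace ℝ (Fin d)) (t : ℕ) (i : Fin n) :
    EuclideanSpace ℝ (Fin d) :=
  (1 - β) • ∑ j ∈ Finset.range (t + 1), β ^ (t - j) • gradient (f i) (xbar j) +
    β ^ (t + 1) • gradient (f i) (xbar 0)

lemma ntil_rec {n d : ℕ} (f : Fin n → EuclideanSpace ℝ (Fin d) → ℝ) (β : ℝ)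
    (xbar : ℕ → EuclideanSpace ℝ (Fin d)) (t : ℕ) (i : Fin n) :
    Ntil f β xbar (t + 1) i = β • Ntil f β xbar t i
      + (1 - β) • gradient (f i) (xbar (t + 1)) := by
  unfold Ntil
  rw [Finset.sum_range_succ]
  have h : ∑ j ∈ Finset.range (t + 1), β ^ (t + 1 - j) • gradient (f i) (xbar j)
      = β • ∑ j ∈ Finset.range (t + 1), β ^ (t - j) • gradient (f i) (xbar j) := by
    rw [Finset.smul_sum]
    refine Finset.sum_congr rfl fun j hj => ?_
    have hj' : j ≤ t := by
      have := Finset.mem_range.mp hj; omega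
    have e : t + 1 - j = (t - j) + 1 := by omega
    rw [e, pow_succ', smul_smul]
  rw [h]
  simp only [Nat.sub_self, pow_zero, one_smul]
  match_scalars <;> ring

lemma ntil_diff {n d : ℕ} (f : Fin n → EuclideanSpace ℝ (Fin d) → ℝ) (β : ℝ)
    (xbar : ℕ → EuclideanSpace ℝ (Fin d)) (i : Fin n) :
    ∀ t : ℕ, Ntil f β xbar (t + 1) i - Ntil f β xbar t i
      = ∑ r ∈ Finset.range (t + 1), ((1 - β) * β ^ (t - r)) •
          (gradient (f i) (xbar (r + 1)) - gradient (f i) (xbar r))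
  | 0 => by
      rw [ntil_rec]
      unfold Ntil
      simp only [Finset.range_one, Finset.sum_singleton, Nat.sub_self, pow_zero, one_smul,
        zero_add, pow_one, mul_one]
      match_scalars <;> ring
  | (t + 1) => by
      rw [Finset.sum_range_succ]
      have hsum : ∑ r ∈ Finset.range (t + 1), ((1 - β) * β ^ (t + 1 - r)) •
            (gradient (f i) (xbar (r + 1)) - gradient (f i) (xbar r))
          = β • ∑ r ∈ Finset.range (t + 1), ((1 - β) * β ^ (t - r)) •
            (gradient (f i) (xbar (r + 1)) - gradient (f i) (xbar r)) := by
        rw [Finset.smul_sum]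
        refine Finset.sum_congr rfl fun r hr => ?_
        have hr' : r ≤ t := by
          have := Finset.mem_range.mp hr; omega
        have e : t + 1 - r = (t - r) + 1 := by omega
        rw [e, smul_smul]
        congr 1
        rw [pow_succ]
        ring
      rw [hsum, ← ntil_diff f β xbar i t, ntil_rec f β xbar (t + 1) i,
        ntil_rec f β xbar t i]
      simp only [Nat.sub_self, pow_zero, mul_one]
      match_scalars <;> ring

lemma ntil_diff_norm_sq_le {n d : ℕ}
    (f : Fin n → EuclideanSpace ℝ (Fin d) → ℝ)
    (L : ℝ)
    (hsmooth : ∀ i x y, ‖gradient (f i) x - gradient (f i) y‖ ≤ L * ‖x - y‖)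
    (α β : ℝ) (hα : 0 < α) (hβ0 : 0 ≤ β) (hβ1 : β < 1)
    (xbar mbar : ℕ → EuclideanSpace ℝ (Fin d))
    (hupd : ∀ r : ℕ, xbar (r + 1) = xbar r - α • mbar r)
    (t : ℕ) (i : Fin n) :
    ‖Ntil f β xbar (t + 1) i - Ntil f β xbar t i‖ ^ 2 ≤
      α ^ 2 * L ^ 2 * ∑ r ∈ Finset.range (t + 1), (1 - β) * β ^ (t - r) * ‖mbar r‖ ^ 2 := by
  set w : ℕ → ℝ := fun r => (1 - β) * β ^ (t - r) with hw_def
  set Δ : ℕ → EuclideanSpace ℝ (Fin d) :=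
    fun r => gradient (f i) (xbar (r + 1)) - gradient (f i) (xbar r) with hΔ_def
  have hw : ∀ r, 0 ≤ w r := fun r =>
    mul_nonneg (by linarith) (pow_nonneg hβ0 _)
  have hΔ : ∀ r, ‖Δ r‖ ≤ α * L * ‖mbar r‖ := by
    intro r
    have h1 : xbar (r + 1) - xbar r = -(α • mbar r) := by rw [hupd r]; abel
    calc ‖Δ r‖ ≤ L * ‖xbar (r + 1) - xbar r‖ := hsmooth i _ _
      _ = L * (α * ‖mbar r‖) := by
          rw [h1, norm_neg, norm_smul, Real.norm_eq_abs, abs_of_pos hα]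
      _ = α * L * ‖mbar r‖ := by ring
  -- sum of weights ≤ 1
  have hwsum : ∑ r ∈ Finset.range (t + 1), w r ≤ 1 := by
    have hre : ∑ r ∈ Finset.range (t + 1), β ^ (t - r)
        = ∑ k ∈ Finset.range (t + 1), β ^ k := by
      have := Finset.sum_range_reflect (fun k => β ^ k) (t + 1)
      simpa using this
    have hmul : ∑ r ∈ Finset.range (t + 1), w r
        = (1 - β) * ∑ k ∈ Finset.range (t + 1), β ^ k := by
      rw [← hre, Finset.mul_sum]
    have hg := geom_sum_mul β (t + 1)
    have hp : (0:ℝ) ≤ β ^ (t + 1) := pow_nonneg hβ0 _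
    rw [hmul]
    nlinarith [hg, hp]
  -- Cauchy–Schwarz
  have key : (∑ r ∈ Finset.range (t + 1), w r * ‖Δ r‖) ^ 2
      ≤ (∑ r ∈ Finset.range (t + 1), w r) *
        (∑ r ∈ Finset.range (t + 1), w r * ‖Δ r‖ ^ 2) := by
    have hcs := Finset.sum_mul_sq_le_sq_mul_sq (Finset.range (t + 1))
      (fun r => Real.sqrt (w r)) (fun r => Real.sqrt (w r) * ‖Δ r‖)
    have e1 : ∀ r ∈ Finset.range (t + 1),
        Real.sqrt (w r) * (Real.sqrt (w r) * ‖Δ r‖) = w r * ‖Δ r‖ := by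
      intro r _
      rw [← mul_assoc, Real.mul_self_sqrt (hw r)]
    have e2 : ∀ r ∈ Finset.range (t + 1), Real.sqrt (w r) ^ 2 = w r := by
      intro r _; exact Real.sq_sqrt (hw r)
    have e3 : ∀ r ∈ Finset.range (t + 1),
        (Real.sqrt (w r) * ‖Δ r‖) ^ 2 = w r * ‖Δ r‖ ^ 2 := by
      intro r _; rw [mul_pow, Real.sq_sqrt (hw r)]
    rwa [Finset.sum_congr rfl e1, Finset.sum_congr rfl e2, Finset.sum_congr rfl e3] at hcs
  have hD : Ntil f β xbar (t + 1) i - Ntil f β xbar t i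
      = ∑ r ∈ Finset.range (t + 1), (w r) • Δ r := ntil_diff f β xbar i t
  have hnorm : ‖Ntil f β xbar (t + 1) i - Ntil f β xbar t i‖
      ≤ ∑ r ∈ Finset.range (t + 1), w r * ‖Δ r‖ := by
    rw [hD]
    refine (norm_sum_le _ _).trans (le_of_eq (Finset.sum_congr rfl fun r _ => ?_))
    rw [norm_smul, Real.norm_eq_abs, abs_of_nonneg (hw r)]
  have hwsum_nn : 0 ≤ ∑ r ∈ Finset.range (t + 1), w r * ‖Δ r‖ ^ 2 :=
    Finset.sum_nonneg fun r _ => mul_nonneg (hw r) (sq_nonneg _)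
  calc ‖Ntil f β xbar (t + 1) i - Ntil f β xbar t i‖ ^ 2
      ≤ (∑ r ∈ Finset.range (t + 1), w r * ‖Δ r‖) ^ 2 :=
        pow_le_pow_left₀ (norm_nonneg _) hnorm 2
    _ ≤ (∑ r ∈ Finset.range (t + 1), w r) *
          (∑ r ∈ Finset.range (t + 1), w r * ‖Δ r‖ ^ 2) := key
    _ ≤ 1 * (∑ r ∈ Finset.range (t + 1), w r * ‖Δ r‖ ^ 2) :=
        mul_le_mul_of_nonneg_right hwsum hwsum_nn
    _ = ∑ r ∈ Finset.range (t + 1), w r * ‖Δ r‖ ^ 2 := one_mul _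
    _ ≤ ∑ r ∈ Finset.range (t + 1), w r * (α * L * ‖mbar r‖) ^ 2 := by
        refine Finset.sum_le_sum fun r _ => ?_
        exact mul_le_mul_of_nonneg_left
          (pow_le_pow_left₀ (norm_nonneg _) (hΔ r) 2) (hw r)
    _ = α ^ 2 * L ^ 2 * ∑ r ∈ Finset.range (t + 1), (1 - β) * β ^ (t - r) * ‖mbar r‖ ^ 2 := by
        rw [Finset.mul_sum]
        refine Finset.sum_congr rfl fun r _ => ?_
        simp only [hw_def]
        ring

lemma sum_sub_mean_sq_le {E : Type*} [NormedAddCommGroup E] [InnerProductSpace ℝ E]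
    {n : ℕ} (hn : 0 < n) (v : Fin n → E) :
    ∑ i, ‖v i - (n : ℝ)⁻¹ • ∑ j, v j‖ ^ 2 ≤ ∑ i, ‖v i‖ ^ 2 := by
  set m : E := (n : ℝ)⁻¹ • ∑ j, v j with hm
  have hn' : ((n : ℝ)) ≠ 0 := by exact_mod_cast hn.ne'
  have hS : ∑ j, v j = (n : ℝ) • m := by
    rw [hm, smul_smul, mul_inv_cancel₀ hn', one_smul]
  have hin : ∑ i, (inner ℝ (v i) m : ℝ) = (n : ℝ) * ‖m‖ ^ 2 := by
    rw [← sum_inner, hS, real_inner_smul_left, real_inner_self_eq_norm_sq]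
  have expand : ∀ i : Fin n, ‖v i - m‖ ^ 2
      = ‖v i‖ ^ 2 - 2 * (inner ℝ (v i) m : ℝ) + ‖m‖ ^ 2 := fun i => norm_sub_sq_real _ _
  have key : ∑ i, ‖v i - m‖ ^ 2 = (∑ i, ‖v i‖ ^ 2) - (n : ℝ) * ‖m‖ ^ 2 := by
    simp_rw [expand]
    rw [Finset.sum_add_distrib, Finset.sum_sub_distrib, ← Finset.mul_sum, hin,
      Finset.sum_const, Finset.card_univ, Fintype.card_fin, nsmul_eq_mul]
    ring
  rw [key]
  have : 0 ≤ (n : ℝ) * ‖m‖ ^ 2 := mul_nonneg (Nat.cast_nonneg n) (sq_nonneg _)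
  linarith

/-- if each `f_i` is `L`-smooth and the averaged iterates satisfy
`x̄^{r+1} = x̄^r - α m̄^r`, then
`‖P_I(Ñ^{t+1} - Ñ^t)‖_F² ≤ n α² L² Σ_{r=0}^t (1-β) β^{t-r} ‖m̄^r‖²`. -/
theorem consensus_gradient_difference_bound {n d : ℕ} (hn : 0 < n)
    (f : Fin n → EuclideanSpace ℝ (Fin d) → ℝ)
    (L : ℝ) (hL : 0 < L)
    (hdiff : ∀ i, Differentiable ℝ (f i))
    (hsmooth : ∀ i x y, ‖gradient (f i) x - gradient (f i) y‖ ≤ L * ‖x - y‖)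
    (α β : ℝ) (hα : 0 < α) (hβ0 : 0 ≤ β) (hβ1 : β < 1)
    (xbar mbar : ℕ → EuclideanSpace ℝ (Fin d))
    (hupd : ∀ r : ℕ, xbar (r + 1) = xbar r - α • mbar r) :
    ∀ t : ℕ,
      ∑ i, ‖(Ntil f β xbar (t + 1) i - Ntil f β xbar t i) -
          (n : ℝ)⁻¹ • ∑ j, (Ntil f β xbar (t + 1) j - Ntil f β xbar t j)‖ ^ 2 ≤
        n * α ^ 2 * L ^ 2 *
          ∑ r ∈ Finset.range (t + 1), (1 - β) * β ^ (t - r) * ‖mbar r‖ ^ 2 := by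
  intro t
  calc ∑ i, ‖(Ntil f β xbar (t + 1) i - Ntil f β xbar t i) -
          (n : ℝ)⁻¹ • ∑ j, (Ntil f β xbar (t + 1) j - Ntil f β xbar t j)‖ ^ 2
      ≤ ∑ i, ‖Ntil f β xbar (t + 1) i - Ntil f β xbar t i‖ ^ 2 :=
        sum_sub_mean_sq_le hn _
    _ ≤ ∑ _i : Fin n, (α ^ 2 * L ^ 2 *
          ∑ r ∈ Finset.range (t + 1), (1 - β) * β ^ (t - r) * ‖mbar r‖ ^ 2) :=
        Finset.sum_le_sum fun i _ =>
          ntil_diff_norm_sq_le f L hsmooth α β hα hβ0 hβ1 xbar mbar hupd t i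
    _ = n * α ^ 2 * L ^ 2 *
          ∑ r ∈ Finset.range (t + 1), (1 - β) * β ^ (t - r) * ‖mbar r‖ ^ 2 := by
        rw [Finset.sum_const, Finset.card_univ, Fintype.card_fin, nsmul_eq_mul]
        ring
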